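/- Let m ≥ 1, let z : Fin m → ℝ, and let k be an integer with 1 ≤ k ≤ m. Define T_k(z) as the maximum over subsets s ⊆ Fin m with cardinality k of ∑_{i∈s} z i (the sum of the k largest entries of z). Then T_k(z) is the least element of the set { k·ρ + ∑ᵢ max(z i − ρ, 0) : ρ ∈ ℝ }; in particular the minimum over ρ ∈ ℝ of k·ρ + ∑ᵢ max(z i − ρ, 0) exists and equals the sum of the k largest entries of z. -/

import Mathlib

/-- variational representation of the sum of the `k` largest entries:
the maximum over subsets `s` of cardinality `k` of `∑_{i∈s} z i` is the least
element of `{ k·ρ + ∑ᵢ max(z i − ρ, 0) : ρ ∈ ℝ }`. -/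
theorem topK_variational (m : ℕ) (hm : 1 ≤ m) (z : Fin m → ℝ)
    (k : ℕ) (hk1 : 1 ≤ k) (hkm : k ≤ m) :
    IsLeast {y : ℝ | ∃ ρ : ℝ, y = k * ρ + ∑ i, max (z i - ρ) 0}
      (((Finset.univ : Finset (Fin m)).powersetCard k).sup'
        (Finset.powersetCard_nonempty.mpr (by simpa using hkm))
        (fun s => ∑ i ∈ s, z i)) := by
  have hne := Finset.powersetCard_nonempty.mpr
      (by simpa using hkm : k ≤ (Finset.univ : Finset (Fin m)).card)
  constructor
  · -- membership: the sup is attained by some set s; take ρ = min over s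
    obtain ⟨s, hs_mem, hs_eq⟩ :=
      Finset.exists_mem_eq_sup' hne (fun s => ∑ i ∈ s, z i)
    rw [Finset.mem_powersetCard] at hs_mem
    have hcard : s.card = k := hs_mem.2
    have hsne : s.Nonempty := Finset.card_pos.mp (by omega)
    set ρ := s.inf' hsne z with hρ
    obtain ⟨j, hj, hjρ⟩ := Finset.exists_mem_eq_inf' hsne z
    have hin : ∀ i ∈ s, ρ ≤ z i := fun i hi => Finset.inf'_le z hi
    have hout : ∀ i ∉ s, z i ≤ ρ := by
      intro i hi
      by_contra h
      push_neg at h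
      have hinotj : i ∉ s.erase j := fun h' => hi (Finset.mem_of_mem_erase h')
      have h1 : (insert i (s.erase j)) ∈ Finset.powersetCard k (Finset.univ : Finset (Fin m)) := by
        rw [Finset.mem_powersetCard]
        refine ⟨Finset.subset_univ _, ?_⟩
        rw [Finset.card_insert_of_notMem hinotj, Finset.card_erase_of_mem hj, hcard]
        omega
      have hsum : ∑ x ∈ insert i (s.erase j), z x = z i + (∑ x ∈ s, z x - z j) := by
        rw [Finset.sum_insert hinotj, Finset.sum_erase_eq_sub hj]
      have hle : ∑ x ∈ insert i (s.erase j), z x ≤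
          ((Finset.univ : Finset (Fin m)).powersetCard k).sup' hne (fun s => ∑ i ∈ s, z i) :=
        Finset.le_sup' (fun s => ∑ i ∈ s, z i) h1
      rw [hsum, hs_eq] at hle
      rw [← hρ] at hjρ
      linarith
    have hmax : ∀ i, max (z i - ρ) 0 = if i ∈ s then z i - ρ else 0 := by
      intro i
      by_cases hi : i ∈ s
      · simp [hi, max_eq_left, sub_nonneg.mpr (hin i hi)]
      · simp [hi, max_eq_right, sub_nonpos.mpr (hout i hi)]
    refine ⟨ρ, ?_⟩
    rw [hs_eq]
    have : ∑ i, max (z i - ρ) 0 = ∑ i ∈ s, (z i - ρ) := by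
      simp only [hmax]
      rw [Finset.sum_ite_mem]
      congr 1
      simp [Finset.inter_eq_right.mpr (Finset.subset_univ s)]
    rw [this, Finset.sum_sub_distrib, Finset.sum_const, hcard]
    push_cast
    ring
  · -- lower bound
    rintro y ⟨ρ, rfl⟩
    apply Finset.sup'_le
    intro s hs
    rw [Finset.mem_powersetCard] at hs
    have hcard : s.card = k := hs.2
    calc ∑ i ∈ s, z i ≤ ∑ i ∈ s, (ρ + max (z i - ρ) 0) := by
          apply Finset.sum_le_sum
          intro i _
          have := le_max_left (z i - ρ) 0
          linarith
      _ = k * ρ + ∑ i ∈ s, max (z i - ρ) 0 := by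
          rw [Finset.sum_add_distrib, Finset.sum_const, hcard]
          push_cast
          ring
      _ ≤ k * ρ + ∑ i, max (z i - ρ) 0 := by
          refine add_le_add_right ?_ _
          exact Finset.sum_le_sum_of_subset_of_nonneg (Finset.subset_univ s)
            (fun i _ _ => le_max_right (z i - ρ) 0)
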